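/- Face elimination reduces the number of edges of the extended line graph by at least one while preserving all source-to-sink path sums, provided absorption occurs: if in a weighted directed graph H a vertex k exists with predecessors equal to the predecessors of i and successors equal to the successors of j, then deleting the edge (i,j) and updating c(k) := c(k) + c(j)·c(i) preserves, for every source s and sink t, the quantity Σ_{paths p: s→t} Π_{v interior to p} c(v), where path weight is the product of interior-vertex weights. -/

import Mathlib

open scoped Classical
def IsPath {V : Type*} (E : V → V → Prop) (u v : V) (l : List V) : Prop :=
  l ≠ [] ∧ l.Chain' E ∧ l.head? = some u ∧ l.getLast? = some v

/-- The weight of a path in a vertex-weighted graph: the product of the weights of the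
interior vertices of the path (all vertices except the two endpoints). -/
def interiorWeight {W R : Type*} [CommRing R] (c : W → R) (l : List W) : R :=
  (((l.drop 1).dropLast).map c).prod


namespace Stmt19Aux

variable {W : Type*}

theorem chain_transGen {F : W → W → Prop} :
    ∀ {l : List W} {x : W}, List.Chain F x l → ∀ y ∈ l, Relation.TransGen F x y := by
  intro l
  induction l with
  | nil => intro x _ y hy; simp at hy
  | cons b tl ih =>
    intro x h y hy
    simp only [List.Chain, List.isChain_cons_cons] at h
    rcases List.mem_cons.1 hy with rfl | hy
    · exact Relation.TransGen.single h.1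
    · exact (Relation.TransGen.single h.1).trans (ih h.2 y hy)

theorem nodup_of_chain' {F : W → W → Prop} (hacyc : ∀ a : W, ¬ Relation.TransGen F a a)
    {l : List W} (h : l.Chain' F) : l.Nodup := by
  rw [List.nodup_iff_sublist]
  intro a hsub
  have h2 : List.Chain' (Relation.TransGen F) [a, a] :=
    List.IsChain.sublist (h.imp fun a b hr => Relation.TransGen.single hr) hsub
  exact hacyc a (List.isChain_cons_cons.1 h2).1

theorem chain'_drop_edge {F : W → W → Prop} {i j : W} :
    ∀ {l : List W}, l.Chain' F → i ∉ l →
      l.Chain' (fun a b => F a b ∧ ¬(a = i ∧ b = j)) := by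
  intro l
  induction l with
  | nil => intro _ _; exact List.isChain_nil
  | cons a tl ih =>
    intro h hi
    rcases tl with _ | ⟨b, tl'⟩
    · exact List.isChain_singleton a
    · rw [List.Chain', List.isChain_cons_cons] at h ⊢
      refine ⟨⟨h.1, fun hc => hi (by simp [hc.1])⟩, ih h.2 fun hb => hi (by simp [hb])⟩

theorem chain'_of_not_uses {F : W → W → Prop} {i j : W} :
    ∀ {l : List W}, l.Chain' F → (∀ u v : List W, l ≠ u ++ i :: j :: v) →
      l.Chain' (fun a b => F a b ∧ ¬(a = i ∧ b = j)) := by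
  intro l
  induction l with
  | nil => intro _ _; exact List.isChain_nil
  | cons a tl ih =>
    intro h hu
    rcases tl with _ | ⟨b, tl'⟩
    · exact List.isChain_singleton a
    · rw [List.Chain', List.isChain_cons_cons] at h ⊢
      refine ⟨⟨h.1, fun hc => ?_⟩, ih h.2 fun u v huv => hu (a :: u) v (by simp [huv])⟩
      exact hu [] tl' (by simp [hc.1, hc.2])

theorem flatMap_eq_self {f : W → List W} :
    ∀ {l : List W}, (∀ x ∈ l, f x = [x]) → l.flatMap f = l := by
  intro l
  induction l with
  | nil => intro _; rfl
  | cons a tl ih =>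
    intro h
    simp only [List.flatMap_cons, h a (by simp), ih fun x hx => h x (by simp [hx])]
    rfl

theorem edge_into {F : W → W → Prop} {l1 l2 : List W} {x : W}
    (h : (l1 ++ x :: l2).Chain' F) (h1 : l1 ≠ []) : F (l1.getLast h1) x := by
  have := (List.isChain_append.1 h).2.2
  exact this _ (by rw [Option.mem_def]; exact List.getLast?_eq_getLast h1) x rfl

theorem edge_out {F : W → W → Prop} {l1 l2 : List W} {x : W}
    (h : (l1 ++ x :: l2).Chain' F) (h2 : l2 ≠ []) : F x (l2.head h2) := by
  have hx : (x :: l2).Chain' F := (List.isChain_append.1 h).2.1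
  exact (List.isChain_cons.1 hx).1 _ (List.head?_eq_head h2)

theorem chain'_splice {F : W → W → Prop} {l1 l2 m m' : List W}
    (h : (l1 ++ m ++ l2).Chain' F) (h1 : l1 ≠ []) (h2 : l2 ≠ [])
    (hm' : m'.Chain' F) (hm'ne : m' ≠ [])
    (hin : F (l1.getLast h1) (m'.head hm'ne))
    (hout : F (m'.getLast hm'ne) (l2.head h2)) :
    (l1 ++ m' ++ l2).Chain' F := by
  rw [List.append_assoc, List.Chain'] at h ⊢
  rw [List.isChain_append] at h
  rw [List.isChain_append]
  refine ⟨h.1, ?_, ?_⟩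
  · rw [List.isChain_append]
    refine ⟨hm', (h.2.1.right_of_append : _), ?_⟩
    intro a ha b hb
    rw [List.getLast?_eq_getLast hm'ne, Option.mem_def, Option.some_inj] at ha
    rw [List.head?_eq_head h2, Option.mem_def, Option.some_inj] at hb
    subst ha; subst hb; exact hout
  · intro a ha b hb
    rw [List.getLast?_eq_getLast h1, Option.mem_def, Option.some_inj] at ha
    rw [List.head?_eq_head (by simp [hm'ne] : m' ++ l2 ≠ []), Option.mem_def, Option.some_inj,
      List.head_append_of_ne_nil hm'ne] at hb
    subst ha; exact hb ▸ hin

theorem interior_eq {l1 l2 m : List W} (h1 : l1 ≠ []) (h2 : l2 ≠ []) :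
    (((l1 ++ m ++ l2).drop 1).dropLast) = l1.tail ++ m ++ l2.dropLast := by
  obtain ⟨a, l1', rfl⟩ := List.exists_cons_of_ne_nil h1
  rw [List.cons_append, List.cons_append, List.drop_one, List.tail_cons, List.tail_cons]
  exact List.dropLast_append_of_ne_nil h2

theorem getLast?_cons_ne {x : W} {l : List W} (h : l ≠ []) :
    (x :: l).getLast? = l.getLast? := by
  rw [show x :: l = [x] ++ l from rfl, List.getLast?_append_of_ne_nil _ h]

theorem head?_append_left {l1 l2 : List W} (h1 : l1 ≠ []) :
    (l1 ++ l2).head? = l1.head? := by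
  obtain ⟨a, l1', rfl⟩ := List.exists_cons_of_ne_nil h1
  rfl

end Stmt19Aux

open Stmt19Aux

/-- Correctness of the absorption step of face elimination: in a finite vertex-weighted
DAG, if `k` has the same predecessors as `i` and the same successors as `j`, then deleting
the edge `(i, j)` while updating `c k := c k + c j * c i` preserves, for every source `s`
and sink `t`, the sum over paths from `s` to `t` of the products of interior vertex
weights. -/
theorem stmt19 {W R : Type*} [Fintype W] [CommRing R] (F : W → W → Prop)
    (hacyc : ∀ a : W, ¬ Relation.TransGen F a a) (c : W → R)
    (i j k : W) (hij : F i j)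
    (hi : (∃ a, F a i) ∧ (∃ b, F i b)) (hj : (∃ a, F a j) ∧ (∃ b, F j b))
    (hki : k ≠ i) (hkj : k ≠ j)
    (hpred : ∀ a, F a k ↔ F a i) (hsucc : ∀ b, F k b ↔ F j b) :
    ∀ s t : W, (∀ a, ¬ F a s) → (∀ b, ¬ F t b) →
      (∑ᶠ l ∈ {l : List W | IsPath F s t l}, interiorWeight c l)
      = ∑ᶠ l ∈ {l : List W | IsPath (fun a b => F a b ∧ ¬(a = i ∧ b = j)) s t l},
          interiorWeight (fun x => if x = k then c k + c j * c i else c x) l := by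
  intro s t hs ht
  set F' : W → W → Prop := fun a b => F a b ∧ ¬(a = i ∧ b = j) with hF'def
  set c' : W → R := fun x => if x = k then c k + c j * c i else c x with hc'def
  have hImp : ∀ {l : List W}, l.Chain' F' → l.Chain' F :=
    fun h => h.imp fun a b hr => hr.1
  have hfinP : {l : List W | IsPath F s t l}.Finite :=
    (List.finite_length_le W (Fintype.card W)).subset
      (fun l hl => (nodup_of_chain' hacyc hl.2.1).length_le_card)
  have hfinP' : {l : List W | IsPath F' s t l}.Finite :=
    (List.finite_length_le W (Fintype.card W)).subset
      (fun l hl => (nodup_of_chain' hacyc (hImp hl.2.1)).length_le_card)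
  rw [finsum_mem_eq_finite_toFinset_sum _ hfinP, finsum_mem_eq_finite_toFinset_sum _ hfinP']
  set A := hfinP.toFinset with hA
  set B := hfinP'.toFinset with hB
  have hmemA : ∀ l : List W, l ∈ A ↔ IsPath F s t l := fun l => by
    rw [hA, Set.Finite.mem_toFinset]; rfl
  have hmemB : ∀ l : List W, l ∈ B ↔ IsPath F' s t l := fun l => by
    rw [hB, Set.Finite.mem_toFinset]; rfl
  set uses : List W → Prop := fun l => ∃ u v : List W, l = u ++ i :: j :: v with huses
  set φ : List W → List W := fun l => l.flatMap (fun x => if x = k then [i, j] else [x])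
    with hφdef
  set ψ : List W → List W :=
    fun l => l.flatMap (fun x => if x = i then [k] else if x = j then [] else [x]) with hψdef
  have hji : j ≠ i := fun h => hacyc j (Relation.TransGen.single (by rw [h]; rw [h] at hij; exact hij))
  -- computation rules for φ and ψ
  have hφc : ∀ l1 l2 : List W, k ∉ l1 → k ∉ l2 → φ (l1 ++ k :: l2) = l1 ++ i :: j :: l2 := by
    intro l1 l2 h1 h2
    rw [hφdef]
    simp only [List.flatMap_append, List.flatMap_cons, if_pos rfl]
    rw [flatMap_eq_self (fun x hx => if_neg (by rintro rfl; exact h1 hx)),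
      flatMap_eq_self (fun x hx => if_neg (by rintro rfl; exact h2 hx))]
    rfl
  have hψc : ∀ l1 l2 : List W, i ∉ l1 → j ∉ l1 → i ∉ l2 → j ∉ l2 →
      ψ (l1 ++ i :: j :: l2) = l1 ++ k :: l2 := by
    intro l1 l2 hi1 hj1 hi2 hj2
    rw [hψdef]
    simp only [List.flatMap_append, List.flatMap_cons, if_pos rfl]
    rw [flatMap_eq_self (fun x hx => by
        rw [if_neg (by rintro rfl; exact hi1 hx), if_neg (by rintro rfl; exact hj1 hx)]),
      flatMap_eq_self (fun x hx => by
        rw [if_neg (by rintro rfl; exact hi2 hx), if_neg (by rintro rfl; exact hj2 hx)])]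
    simp [hji]
  -- structural facts about paths through k in the new graph
  have keyB : ∀ l1 l2 : List W, IsPath F' s t (l1 ++ k :: l2) →
      ∃ (h1 : l1 ≠ []) (h2 : l2 ≠ []),
        k ∉ l1 ∧ k ∉ l2 ∧ i ∉ l1 ∧ i ∉ l2 ∧ j ∉ l1 ∧ j ∉ l2 ∧
        IsPath F s t (l1 ++ i :: j :: l2) := by
    intro l1 l2 hl
    obtain ⟨hne, hch', hhd, hlast⟩ := hl
    have hch : (l1 ++ k :: l2).Chain' F := hImp hch'
    have hnd := nodup_of_chain' hacyc hch
    have hk1 : k ∉ l1 := by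
      intro hk; rw [List.nodup_append'] at hnd; exact hnd.2.2 hk (by simp)
    have hk2 : k ∉ l2 := by
      rw [List.nodup_append'] at hnd; exact fun hk => (List.nodup_cons.1 hnd.2.1).1 hk
    have h1 : l1 ≠ [] := by
      rintro rfl
      simp only [List.nil_append, List.head?_cons, Option.some_inj] at hhd
      obtain ⟨a, ha⟩ := hi.1
      exact hs a (hhd ▸ (hpred a).2 ha)
    have h2 : l2 ≠ [] := by
      rintro rfl
      rw [List.getLast?_append_of_ne_nil _ (by simp : [k] ≠ [])] at hlast
      simp only [List.getLast?_singleton, Option.some_inj] at hlast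
      obtain ⟨b, hb⟩ := hj.2
      exact ht b (hlast ▸ (hsucc b).2 hb)
    have hin : F (l1.getLast h1) k := edge_into hch h1
    have hout : F k (l2.head h2) := edge_out hch h2
    have hshape : (l1 ++ [k]) ++ l2 = l1 ++ k :: l2 := by simp
    have hch2 : (l1 ++ [i, j] ++ l2).Chain' F := by
      refine chain'_splice (m := [k]) (hshape ▸ hch) h1 h2 (List.isChain_pair.2 hij)
        (by simp) ?_ ?_
      · simpa using (hpred _).1 hin
      · simpa using (hsucc _).1 hout
    have hnd2 := nodup_of_chain' hacyc hch2
    rw [List.append_assoc, List.nodup_append'] at hnd2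
    have hij1 : i ∉ l1 := fun h => hnd2.2.2 h (by simp)
    have hjj1 : j ∉ l1 := fun h => hnd2.2.2 h (by simp)
    have hnd2' : (i :: j :: l2).Nodup := by simpa using hnd2.2.1
    rw [List.nodup_cons, List.nodup_cons] at hnd2'
    have hij2 : i ∉ l2 := fun h => hnd2'.1 (List.mem_cons_of_mem _ h)
    have hjj2 : j ∉ l2 := hnd2'.2.1
    refine ⟨h1, h2, hk1, hk2, hij1, hij2, hjj1, hjj2, ?_, ?_, ?_, ?_⟩
    · simp
    · have : (l1 ++ [i, j]) ++ l2 = l1 ++ i :: j :: l2 := by simp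
      exact this ▸ hch2
    · rw [head?_append_left h1]; rw [head?_append_left h1] at hhd; exact hhd
    · rw [List.getLast?_append_of_ne_nil _ (by simp : i :: j :: l2 ≠ [])]
      rw [List.getLast?_append_of_ne_nil _ (by simp : k :: l2 ≠ [])] at hlast
      rw [getLast?_cons_ne (by simp : j :: l2 ≠ []), getLast?_cons_ne h2]
      rw [getLast?_cons_ne h2] at hlast
      exact hlast
  -- structural facts about paths using the edge (i, j) in the old graph
  have keyA : ∀ l1 l2 : List W, IsPath F s t (l1 ++ i :: j :: l2) →
      ∃ (h1 : l1 ≠ []) (h2 : l2 ≠ []),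
        k ∉ l1 ∧ k ∉ l2 ∧ i ∉ l1 ∧ i ∉ l2 ∧ j ∉ l1 ∧ j ∉ l2 ∧
        IsPath F' s t (l1 ++ k :: l2) := by
    intro l1 l2 hl
    obtain ⟨hne, hch, hhd, hlast⟩ := hl
    have hnd := nodup_of_chain' hacyc hch
    have hnds := hnd
    rw [List.nodup_append'] at hnds
    have hij1 : i ∉ l1 := fun h => hnds.2.2 h (by simp)
    have hjj1 : j ∉ l1 := fun h => hnds.2.2 h (by simp)
    have hnds' := hnds.2.1
    rw [List.nodup_cons, List.nodup_cons] at hnds'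
    have hij2 : i ∉ l2 := fun h => hnds'.1 (List.mem_cons_of_mem _ h)
    have hjj2 : j ∉ l2 := hnds'.2.1
    have h1 : l1 ≠ [] := by
      rintro rfl
      simp only [List.nil_append, List.head?_cons, Option.some_inj] at hhd
      obtain ⟨a, ha⟩ := hi.1
      exact hs a (hhd ▸ ha)
    have h2 : l2 ≠ [] := by
      rintro rfl
      rw [List.getLast?_append_of_ne_nil _ (by simp : i :: j :: ([] : List W) ≠ [])] at hlast
      simp only [getLast?_cons_ne (by simp : [j] ≠ ([] : List W)),
        List.getLast?_singleton, Option.some_inj] at hlast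
      obtain ⟨b, hb⟩ := hj.2
      exact ht b (hlast ▸ hb)
    have hin : F (l1.getLast h1) i := edge_into hch h1
    have hout : F j (l2.head h2) := by
      have hrt : (i :: j :: l2).Chain' F := (List.isChain_append.1 hch).2.1
      have := (List.isChain_cons_cons.1 hrt).2
      exact (List.isChain_cons.1 this).1 _ (List.head?_eq_head h2)
    have hshape : (l1 ++ [i, j]) ++ l2 = l1 ++ i :: j :: l2 := by simp
    have hch2 : (l1 ++ [k] ++ l2).Chain' F := by
      refine chain'_splice (m := [i, j]) (hshape ▸ hch) h1 h2 (List.IsChain.singleton k) (by simp) ?_ ?_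
      · simpa using (hpred _).2 hin
      · simpa using (hsucc _).2 hout
    have hnd2 := nodup_of_chain' hacyc hch2
    rw [List.append_assoc, List.nodup_append'] at hnd2
    have hk1 : k ∉ l1 := fun h => hnd2.2.2 h (by simp)
    have hk2 : k ∉ l2 := fun h => (List.nodup_cons.1 (by simpa using hnd2.2.1)).1 h
    have hshape2 : (l1 ++ [k]) ++ l2 = l1 ++ k :: l2 := by simp
    have hchF' : (l1 ++ k :: l2).Chain' F' := by
      refine chain'_drop_edge (hshape2 ▸ hch2) ?_
      simp only [List.mem_append, List.mem_cons]
      rintro (h | h | h)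
      · exact hij1 h
      · exact hki h.symm
      · exact hij2 h
    refine ⟨h1, h2, hk1, hk2, hij1, hij2, hjj1, hjj2, by simp, hchF', ?_, ?_⟩
    · rw [head?_append_left h1]; rw [head?_append_left h1] at hhd; exact hhd
    · rw [List.getLast?_append_of_ne_nil _ (by simp : k :: l2 ≠ [])]
      rw [List.getLast?_append_of_ne_nil _ (by simp : i :: j :: l2 ≠ [])] at hlast
      rw [getLast?_cons_ne h2]
      rw [getLast?_cons_ne (by simp : j :: l2 ≠ []),
        getLast?_cons_ne h2] at hlast
      exact hlast
  -- the splitting of the new sum along k-membership, and of the old sum along edge use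
  have hAn : A.filter (fun l => ¬ uses l) = B := by
    ext l
    simp only [Finset.mem_filter, hmemA l, hmemB l]
    constructor
    · rintro ⟨⟨hne, hch, hhd, hlast⟩, hnu⟩
      exact ⟨hne, chain'_of_not_uses hch (fun u v h => hnu ⟨u, v, h⟩), hhd, hlast⟩
    · rintro ⟨hne, hch, hhd, hlast⟩
      refine ⟨⟨hne, hImp hch, hhd, hlast⟩, ?_⟩
      rintro ⟨u, v, rfl⟩
      exact (List.isChain_cons_cons.1 (hch.right_of_append)).1.2 ⟨rfl, rfl⟩
  have step1 : ∑ l ∈ A, interiorWeight c l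
      = ∑ l ∈ A.filter uses, interiorWeight c l + ∑ l ∈ B, interiorWeight c l := by
    rw [← hAn]; exact (Finset.sum_filter_add_sum_filter_not A uses _).symm
  have step2 : ∑ l ∈ B, interiorWeight c' l
      = ∑ l ∈ B.filter (fun l => k ∈ l), interiorWeight c' l
        + ∑ l ∈ B.filter (fun l => ¬ k ∈ l), interiorWeight c' l :=
    (Finset.sum_filter_add_sum_filter_not B _ _).symm
  have hc'eq : ∀ l : List W, k ∉ l → interiorWeight c' l = interiorWeight c l := by
    intro l hkl
    unfold interiorWeight
    congr 1
    refine List.map_congr_left fun x hx => ?_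
    have hxl : x ∈ l := (List.dropLast_sublist _).subset hx |> (List.drop_sublist 1 l).subset
    rw [hc'def]
    exact if_neg (by rintro rfl; exact hkl hxl)
  have step3 : ∑ l ∈ B.filter (fun l => ¬ k ∈ l), interiorWeight c' l
      = ∑ l ∈ B.filter (fun l => ¬ k ∈ l), interiorWeight c l := by
    refine Finset.sum_congr rfl fun l hl => ?_
    rw [Finset.mem_filter] at hl
    exact hc'eq l hl.2
  have step4 : ∑ l ∈ B.filter (fun l => k ∈ l), interiorWeight c' l
      = ∑ l ∈ B.filter (fun l => k ∈ l),
          (interiorWeight c l + interiorWeight c (φ l)) := by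
    refine Finset.sum_congr rfl fun l hl => ?_
    rw [Finset.mem_filter, hmemB l] at hl
    obtain ⟨hl, hkl⟩ := hl
    obtain ⟨l1, l2, rfl⟩ := List.append_of_mem hkl
    obtain ⟨h1, h2, hk1, hk2, hi1, hi2, hj1, hj2, _⟩ := keyB l1 l2 hl
    rw [hφc l1 l2 hk1 hk2]
    have e1 : l1 ++ k :: l2 = l1 ++ [k] ++ l2 := by simp
    have e2 : l1 ++ i :: j :: l2 = l1 ++ [i, j] ++ l2 := by simp
    unfold interiorWeight
    rw [e1, e2, interior_eq h1 h2, interior_eq h1 h2]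
    have hk1' : k ∉ l1.tail := fun h => hk1 (List.mem_of_mem_tail h)
    have hk2' : k ∉ l2.dropLast := fun h => hk2 ((List.dropLast_sublist _).subset h)
    simp only [List.map_append, List.prod_append, List.map_cons, List.map_nil,
      List.prod_cons, List.prod_nil]
    rw [List.map_congr_left (fun x hx => if_neg (by rintro rfl; exact hk1' hx) :
        ∀ x ∈ l1.tail, c' x = c x),
      List.map_congr_left (fun x hx => if_neg (by rintro rfl; exact hk2' hx) :
        ∀ x ∈ l2.dropLast, c' x = c x)]
    have hck : c' k = c k + c j * c i := by rw [hc'def]; exact if_pos rfl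
    rw [hck]
    ring
  have step5 : ∑ l ∈ B.filter (fun l => k ∈ l), interiorWeight c (φ l)
      = ∑ l ∈ A.filter uses, interiorWeight c l := by
    refine Finset.sum_nbij' φ ψ ?_ ?_ ?_ ?_ ?_
    · intro l hl
      rw [Finset.mem_filter, hmemB l] at hl
      obtain ⟨hl, hkl⟩ := hl
      obtain ⟨l1, l2, rfl⟩ := List.append_of_mem hkl
      obtain ⟨h1, h2, hk1, hk2, hi1, hi2, hj1, hj2, hP⟩ := keyB l1 l2 hl
      rw [Finset.mem_filter, hmemA, hφc l1 l2 hk1 hk2]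
      exact ⟨hP, l1, l2, rfl⟩
    · intro l hl
      rw [Finset.mem_filter, hmemA l, huses] at hl
      obtain ⟨hl, l1, l2, rfl⟩ := hl
      obtain ⟨h1, h2, hk1, hk2, hi1, hi2, hj1, hj2, hP⟩ := keyA l1 l2 hl
      rw [Finset.mem_filter, hmemB, hψc l1 l2 hi1 hj1 hi2 hj2]
      exact ⟨hP, by simp⟩
    · intro l hl
      rw [Finset.mem_filter, hmemB l] at hl
      obtain ⟨hl, hkl⟩ := hl
      obtain ⟨l1, l2, rfl⟩ := List.append_of_mem hkl
      obtain ⟨h1, h2, hk1, hk2, hi1, hi2, hj1, hj2, hP⟩ := keyB l1 l2 hl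
      rw [hφc l1 l2 hk1 hk2, hψc l1 l2 hi1 hj1 hi2 hj2]
    · intro l hl
      rw [Finset.mem_filter, hmemA l, huses] at hl
      obtain ⟨hl, l1, l2, rfl⟩ := hl
      obtain ⟨h1, h2, hk1, hk2, hi1, hi2, hj1, hj2, hP⟩ := keyA l1 l2 hl
      rw [hψc l1 l2 hi1 hj1 hi2 hj2, hφc l1 l2 hk1 hk2]
    · intro l hl; rfl
  rw [step1, step2, step3, step4, Finset.sum_add_distrib, step5,
    ← Finset.sum_filter_add_sum_filter_not B (fun l => k ∈ l) (interiorWeight c)]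
  ring
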